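/- arXiv:2212.07248 — 3 statements merged into one kernel-verified Lean document; each statement's English description precedes it below -/
import Mathlib

section
/- Let A₁₁ ∈ ℝ^{k×k} and A₂₂ ∈ ℝ^{(n−k)×(n−k)} be symmetric with disjoint spectra. Then the Sylvester operator T: ℝ^{(n−k)×k} → ℝ^{(n−k)×k}, T(X) = X A₁₁ − A₂₂ X, is invertible, and the norm of its inverse induced by the Frobenius norm equals 1/s₀, where s₀ = min{|λ − ν| : λ ∈ σ(A₁₁), ν ∈ σ(A₂₂)}. -/
open Matrix

/-- The Frobenius norm of a real matrix. -/
noncomputable def frob {m n : Type*} [Fintype m] [Fintype n] (X : Matrix m n ℝ) : ℝ :=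
  Real.sqrt (∑ i, ∑ j, X i j ^ 2)




lemma frob_sum_eq_trace {m n : Type*} [Fintype m] [Fintype n] (X : Matrix m n ℝ) :
    (∑ i, ∑ j, X i j ^ 2) = Matrix.trace (X * Xᵀ) := by
  simp [Matrix.trace, Matrix.mul_apply, Matrix.diag, sq]

lemma frob_nonneg {m n : Type*} [Fintype m] [Fintype n] (X : Matrix m n ℝ) : 0 ≤ frob X :=
  Real.sqrt_nonneg _

lemma frob_pos {m n : Type*} [Fintype m] [Fintype n] {X : Matrix m n ℝ} (hX : X ≠ 0) :
    0 < frob X := by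
  rcases (frob_nonneg X).lt_or_eq with h | h
  · exact h
  · exfalso
    apply hX
    have hsum : (∑ i, ∑ j, X i j ^ 2) = 0 := by
      have h0 : 0 ≤ ∑ i, ∑ j, X i j ^ 2 :=
        Finset.sum_nonneg fun i _ => Finset.sum_nonneg fun j _ => sq_nonneg _
      by_contra hne
      have : 0 < ∑ i, ∑ j, X i j ^ 2 := lt_of_le_of_ne h0 (Ne.symm hne)
      have := Real.sqrt_pos.mpr this
      rw [frob] at h; linarith
    ext i j
    have h1 : ∀ i ∈ Finset.univ, (0:ℝ) ≤ ∑ j, X i j ^ 2 :=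
      fun i _ => Finset.sum_nonneg fun j _ => sq_nonneg _
    have h2 := (Finset.sum_eq_zero_iff_of_nonneg h1).mp hsum i (Finset.mem_univ i)
    have h3 := (Finset.sum_eq_zero_iff_of_nonneg
      (fun j _ => sq_nonneg (X i j))).mp h2 j (Finset.mem_univ j)
    simpa [pow_eq_zero_iff] using h3

lemma frob_conj {m n p q : Type*} [Fintype m] [Fintype n] [Fintype p] [Fintype q] [DecidableEq m] [DecidableEq n]
    (U : Matrix p m ℝ) (V : Matrix n q ℝ) (X : Matrix m n ℝ)
    (hU : Uᵀ * U = 1) (hV : V * Vᵀ = 1) : frob (U * X * V) = frob X := by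
  unfold frob
  rw [frob_sum_eq_trace, frob_sum_eq_trace]
  have h : (U * X * V) * (U * X * V)ᵀ = U * (X * Xᵀ) * Uᵀ := by
    simp only [transpose_mul, ← Matrix.mul_assoc]
    rw [Matrix.mul_assoc (U * X) V Vᵀ, hV, Matrix.mul_one, Matrix.mul_assoc]
  rw [h, Matrix.trace_mul_comm, ← Matrix.mul_assoc, ← Matrix.mul_assoc, hU, Matrix.one_mul]

lemma frob_smul {m n : Type*} [Fintype m] [Fintype n] (c : ℝ) (X : Matrix m n ℝ) :
    frob (c • X) = |c| * frob X := by
  unfold frob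
  have : (∑ i, ∑ j, (c • X) i j ^ 2) = c ^ 2 * ∑ i, ∑ j, X i j ^ 2 := by
    simp [Finset.mul_sum, mul_pow]
  rw [this, Real.sqrt_mul (sq_nonneg c), Real.sqrt_sq_eq_abs]

lemma frob_stdBasis {m n : Type*} [Fintype m] [Fintype n] [DecidableEq m] [DecidableEq n]
    (i₀ : m) (j₀ : n) : frob (Matrix.single i₀ j₀ (1:ℝ)) = 1 := by
  unfold frob
  have : (∑ i, ∑ j, (Matrix.single i₀ j₀ (1:ℝ)) i j ^ 2) = 1 := by
    simp [Matrix.single, ite_and, apply_ite (· ^ (2:ℕ))]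
  rw [this, Real.sqrt_one]

/-- If the symmetric matrices `A₁₁` and `A₂₂` have disjoint spectra, the Sylvester operator
`T(X) = X A₁₁ - A₂₂ X` is invertible and the norm of its inverse induced by the Frobenius
norm equals `1/s₀`, where `s₀` is the minimal distance between the spectra. -/
theorem stmt8 (k l : ℕ)
    (A₁₁ : Matrix (Fin k) (Fin k) ℝ) (A₂₂ : Matrix (Fin l) (Fin l) ℝ)
    (h₁ : A₁₁.IsSymm) (h₂ : A₂₂.IsSymm)
    (hdisj : Disjoint (spectrum ℝ A₁₁) (spectrum ℝ A₂₂))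
    (s₀ : ℝ)
    (hs₀ : IsLeast {r | ∃ lam ∈ spectrum ℝ A₁₁, ∃ ν ∈ spectrum ℝ A₂₂, r = |lam - ν|} s₀) :
    ∃ S : Matrix (Fin l) (Fin k) ℝ →ₗ[ℝ] Matrix (Fin l) (Fin k) ℝ,
      (∀ X, S (X * A₁₁ - A₂₂ * X) = X) ∧
      (∀ X, (S X) * A₁₁ - A₂₂ * (S X) = X) ∧
      IsGreatest {c | ∃ X : Matrix (Fin l) (Fin k) ℝ, X ≠ 0 ∧ c = frob (S X) / frob X}
        (1 / s₀) := by
  have hA₁ : A₁₁.IsHermitian := by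
    rwa [Matrix.IsHermitian, Matrix.conjTranspose_eq_transpose_of_trivial]
  have hA₂ : A₂₂.IsHermitian := by
    rwa [Matrix.IsHermitian, Matrix.conjTranspose_eq_transpose_of_trivial]
  set U₁ : Matrix (Fin k) (Fin k) ℝ := (hA₁.eigenvectorUnitary : Matrix (Fin k) (Fin k) ℝ) with hU₁def
  set U₂ : Matrix (Fin l) (Fin l) ℝ := (hA₂.eigenvectorUnitary : Matrix (Fin l) (Fin l) ℝ) with hU₂def
  set d₁ : Fin k → ℝ := hA₁.eigenvalues with hd₁def
  set d₂ : Fin l → ℝ := hA₂.eigenvalues with hd₂def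
  have hU₁ : U₁ * star U₁ = 1 := Matrix.mem_unitaryGroup_iff.mp hA₁.eigenvectorUnitary.2
  have hU₂ : U₂ * star U₂ = 1 := Matrix.mem_unitaryGroup_iff.mp hA₂.eigenvectorUnitary.2
  have hU₁' : star U₁ * U₁ = 1 := Matrix.mem_unitaryGroup_iff'.mp hA₁.eigenvectorUnitary.2
  have hU₂' : star U₂ * U₂ = 1 := Matrix.mem_unitaryGroup_iff'.mp hA₂.eigenvectorUnitary.2
  have hspec₁ : A₁₁ = U₁ * Matrix.diagonal d₁ * star U₁ := by
    have := hA₁.spectral_theorem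
    simpa using this
  have hspec₂ : A₂₂ = U₂ * Matrix.diagonal d₂ * star U₂ := by
    have := hA₂.spectral_theorem
    simpa using this
  have hne : ∀ (i : Fin l) (j : Fin k), d₁ j - d₂ i ≠ 0 := by
    intro i j h
    have h1 : d₁ j ∈ spectrum ℝ A₁₁ := hA₁.eigenvalues_mem_spectrum_real j
    have h2 : d₂ i ∈ spectrum ℝ A₂₂ := hA₂.eigenvalues_mem_spectrum_real i
    have heq : d₁ j = d₂ i := by linarith
    exact Set.disjoint_left.mp hdisj h1 (heq ▸ h2)
  have hs₀pos : 0 < s₀ := by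
    obtain ⟨lam, hlam, ν, hν, hr⟩ := hs₀.1
    have hneq : lam ≠ ν := fun h => Set.disjoint_left.mp hdisj hlam (h ▸ hν)
    rw [hr]
    exact abs_pos.mpr (sub_ne_zero.mpr hneq)
  have hlow : ∀ (i : Fin l) (j : Fin k), s₀ ≤ |d₁ j - d₂ i| := fun i j =>
    hs₀.2 ⟨d₁ j, hA₁.eigenvalues_mem_spectrum_real j, d₂ i, hA₂.eigenvalues_mem_spectrum_real i, rfl⟩
  -- cancellation helpers
  have cancel : ∀ Y : Matrix (Fin l) (Fin k) ℝ, U₂ * (star U₂ * Y * U₁) * star U₁ = Y := by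
    intro Y
    simp only [← Matrix.mul_assoc]
    rw [hU₂, Matrix.one_mul, Matrix.mul_assoc, hU₁, Matrix.mul_one]
  have cancel' : ∀ M : Matrix (Fin l) (Fin k) ℝ, star U₂ * (U₂ * M * star U₁) * U₁ = M := by
    intro M
    simp only [← Matrix.mul_assoc]
    rw [hU₂', Matrix.one_mul, Matrix.mul_assoc, hU₁', Matrix.mul_one]
  -- the key diagonalization identity
  have key : ∀ Y : Matrix (Fin l) (Fin k) ℝ,
      star U₂ * (Y * A₁₁ - A₂₂ * Y) * U₁ =
        Matrix.of fun i j => (star U₂ * Y * U₁) i j * (d₁ j - d₂ i) := by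
    intro Y
    have e1 : star U₂ * (Y * A₁₁) * U₁ = (star U₂ * Y * U₁) * Matrix.diagonal d₁ := by
      conv_lhs => rw [hspec₁]
      simp only [Matrix.mul_assoc]
      rw [hU₁', Matrix.mul_one]
    have e2 : star U₂ * (A₂₂ * Y) * U₁ = Matrix.diagonal d₂ * (star U₂ * Y * U₁) := by
      conv_lhs => rw [hspec₂]
      simp only [Matrix.mul_assoc]
      rw [← Matrix.mul_assoc (star U₂) U₂, hU₂', Matrix.one_mul]
    rw [Matrix.mul_sub, Matrix.sub_mul, e1, e2]
    ext i j
    simp only [Matrix.sub_apply, Matrix.mul_diagonal, Matrix.diagonal_mul, Matrix.of_apply]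
    ring
  -- the inverse operator
  refine ⟨{ toFun := fun Z => U₂ * (Matrix.of fun i j => (star U₂ * Z * U₁) i j * (d₁ j - d₂ i)⁻¹) * star U₁, map_add' := ?_, map_smul' := ?_ }, ?_, ?_, ?_⟩
  · intro Z W
    have h : (Matrix.of fun i j => (star U₂ * (Z + W) * U₁) i j * (d₁ j - d₂ i)⁻¹) =
        (Matrix.of fun i j => (star U₂ * Z * U₁) i j * (d₁ j - d₂ i)⁻¹) +
        (Matrix.of fun i j => (star U₂ * W * U₁) i j * (d₁ j - d₂ i)⁻¹) := by
      ext i j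
      simp [Matrix.mul_add, Matrix.add_mul, Matrix.add_apply, add_mul]
    rw [h, Matrix.mul_add, Matrix.add_mul]
  · intro a Z
    have h : (Matrix.of fun i j => (star U₂ * (a • Z) * U₁) i j * (d₁ j - d₂ i)⁻¹) =
        a • (Matrix.of fun i j => (star U₂ * Z * U₁) i j * (d₁ j - d₂ i)⁻¹) := by
      ext i j
      simp [Matrix.mul_smul, Matrix.smul_mul, Matrix.smul_apply, smul_eq_mul, mul_assoc]
    dsimp only [RingHom.id_apply]
    rw [h, Matrix.mul_smul, Matrix.smul_mul]
  · -- left inverse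
    intro Y
    simp only [LinearMap.coe_mk, AddHom.coe_mk]
    have h : (Matrix.of fun i j => (star U₂ * (Y * A₁₁ - A₂₂ * Y) * U₁) i j * (d₁ j - d₂ i)⁻¹) =
        star U₂ * Y * U₁ := by
      ext i j
      rw [key]
      simp only [Matrix.of_apply]
      rw [mul_assoc, mul_inv_cancel₀ (hne i j), mul_one]
    rw [h, cancel]
  · -- right inverse
    intro Z
    simp only [LinearMap.coe_mk, AddHom.coe_mk]
    set M : Matrix (Fin l) (Fin k) ℝ :=
      Matrix.of fun i j => (star U₂ * Z * U₁) i j * (d₁ j - d₂ i)⁻¹ with hM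
    have h1 : star U₂ * (U₂ * M * star U₁ * A₁₁ - A₂₂ * (U₂ * M * star U₁)) * U₁ =
        Matrix.of fun i j => (star U₂ * (U₂ * M * star U₁) * U₁) i j * (d₁ j - d₂ i) :=
      key (U₂ * M * star U₁)
    rw [cancel' M] at h1
    have h2 : (Matrix.of fun i j => M i j * (d₁ j - d₂ i)) = star U₂ * Z * U₁ := by
      ext i j
      simp only [Matrix.of_apply, hM]
      rw [mul_assoc, inv_mul_cancel₀ (hne i j), mul_one]
    rw [h2] at h1
    calc U₂ * M * star U₁ * A₁₁ - A₂₂ * (U₂ * M * star U₁)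
        = U₂ * (star U₂ * (U₂ * M * star U₁ * A₁₁ - A₂₂ * (U₂ * M * star U₁)) * U₁) * star U₁ :=
          (cancel _).symm
      _ = U₂ * (star U₂ * Z * U₁) * star U₁ := by rw [h1]
      _ = Z := cancel Z
  · -- the operator norm
    have ht₁ : (star U₁)ᵀ = U₁ := by
      rw [Matrix.star_eq_conjTranspose, Matrix.conjTranspose_eq_transpose_of_trivial,
        Matrix.transpose_transpose]
    have ht₂ : U₂ᵀ = star U₂ := by
      rw [Matrix.star_eq_conjTranspose, Matrix.conjTranspose_eq_transpose_of_trivial]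
    have frobinv : ∀ M : Matrix (Fin l) (Fin k) ℝ, frob (U₂ * M * star U₁) = frob M := by
      intro M
      apply frob_conj
      · rw [ht₂]; exact hU₂'
      · rw [ht₁]; exact hU₁'
    have bound : ∀ Z : Matrix (Fin l) (Fin k) ℝ,
        frob (U₂ * (Matrix.of fun i j => (star U₂ * Z * U₁) i j * (d₁ j - d₂ i)⁻¹) * star U₁) ≤
          (1/s₀) * frob Z := by
      intro Z
      rw [frobinv]
      have hZ : frob Z = frob (star U₂ * Z * U₁) := by
        conv_lhs => rw [← cancel Z]
        rw [frobinv]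
      rw [hZ]
      unfold frob
      have hsum : (∑ i, ∑ j, (Matrix.of fun i j =>
            (star U₂ * Z * U₁) i j * (d₁ j - d₂ i)⁻¹) i j ^ 2) ≤
          (1/s₀)^2 * ∑ i, ∑ j, (star U₂ * Z * U₁) i j ^ 2 := by
        rw [Finset.mul_sum]
        refine Finset.sum_le_sum fun i _ => ?_
        rw [Finset.mul_sum]
        refine Finset.sum_le_sum fun j _ => ?_
        simp only [Matrix.of_apply, mul_pow]
        rw [mul_comm ((1/s₀)^2)]
        refine mul_le_mul_of_nonneg_left ?_ (sq_nonneg _)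
        rw [← sq_abs ((d₁ j - d₂ i)⁻¹), ← sq_abs (1/s₀)]
        refine pow_le_pow_left₀ (abs_nonneg _) ?_ 2
        rw [abs_inv, abs_of_pos (by positivity : (0:ℝ) < 1/s₀), one_div]
        exact inv_anti₀ hs₀pos (hlow i j)
      calc Real.sqrt (∑ i, ∑ j, (Matrix.of fun i j =>
              (star U₂ * Z * U₁) i j * (d₁ j - d₂ i)⁻¹) i j ^ 2)
          ≤ Real.sqrt ((1/s₀)^2 * ∑ i, ∑ j, (star U₂ * Z * U₁) i j ^ 2) :=
            Real.sqrt_le_sqrt hsum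
        _ = (1/s₀) * Real.sqrt (∑ i, ∑ j, (star U₂ * Z * U₁) i j ^ 2) := by
            rw [Real.sqrt_mul (sq_nonneg _), Real.sqrt_sq (by positivity : (0:ℝ) ≤ 1/s₀)]
    constructor
    · -- membership : the bound is attained
      obtain ⟨lam, hlam, ν, hν, hr⟩ := hs₀.1
      rw [hA₁.spectrum_real_eq_range_eigenvalues] at hlam
      rw [hA₂.spectrum_real_eq_range_eigenvalues] at hν
      obtain ⟨j₀, hj₀⟩ := hlam
      obtain ⟨i₀, hi₀⟩ := hν
      have hfrobE : frob (U₂ * Matrix.single i₀ j₀ (1:ℝ) * star U₁) = 1 := by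
        rw [frobinv, frob_stdBasis]
      refine ⟨U₂ * Matrix.single i₀ j₀ (1:ℝ) * star U₁, ?_, ?_⟩
      · intro h0
        rw [h0] at hfrobE
        simp [frob] at hfrobE
      · dsimp only [LinearMap.coe_mk, AddHom.coe_mk]
        have hE : (Matrix.of fun i j =>
            (star U₂ * (U₂ * Matrix.single i₀ j₀ (1:ℝ) * star U₁) * U₁) i j *
              (d₁ j - d₂ i)⁻¹) =
            ((d₁ j₀ - d₂ i₀)⁻¹) • Matrix.single i₀ j₀ (1:ℝ) := by
          rw [cancel']
          ext i j
          simp only [Matrix.of_apply, Matrix.smul_apply, smul_eq_mul]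
          by_cases hi : i₀ = i <;> by_cases hj : j₀ = j <;>
            simp [Matrix.single, hi, hj, mul_comm]
        have hj₀' : d₁ j₀ = lam := hj₀
        have hi₀' : d₂ i₀ = ν := hi₀
        rw [hE, Matrix.mul_smul, Matrix.smul_mul, frob_smul, frobinv, frob_stdBasis,
          hj₀', hi₀', abs_inv, ← hr]
        simp [one_div]
    · -- upper bound
      rintro c ⟨X, hX, rfl⟩
      dsimp only [LinearMap.coe_mk, AddHom.coe_mk]
      rw [div_le_iff₀ (frob_pos hX)]
      exact bound X
end

section
/- Let A₁₁ ∈ ℝ^{k×k} and A₂₂ ∈ ℝ^{(n−k)×(n−k)} be symmetric, and let A₁₁(μ), A₂₂(μ) and A₁₁^{(k)}, A₂₂^{(k)} be such that A(μ) has disjoint block spectra. Then the eigenvalues of the composed self-adjoint operator X ↦ T^{(k)}(T(μ)⁻¹(X)), where T^{(k)}(X) = X A₁₁^{(k)} − A₂₂^{(k)} X and T(μ)(X) = X A₁₁(μ) − A₂₂(μ) X, are given by (λ_i^{(k)} − λ_j^{(k)}) / ⟨Λ_i − Λ_j, μ⟩ over pairs of eigenvalue vectors Λ_i of the first block and Λ_j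 of the second block, provided the two families {A₁₁^{(k)}}_k and {A₂₂^{(k)}}_k are each commuting families that are simultaneously diagonalized together with A₁₁(μ) and A₂₂(μ) respectively. -/
open Matrix

lemma sbm_mul_diag {m n : Type*} [Fintype m] [Fintype n] [DecidableEq m] [DecidableEq n]
    (j : m) (i : n) (f : n → ℝ) :
    Matrix.single j i (1:ℝ) * diagonal f = f i • Matrix.single j i (1:ℝ) := by
  ext a b
  rw [Matrix.mul_diagonal]
  by_cases h : b = i <;> simp [Matrix.single, h] <;> aesop

lemma diag_mul_sbm {m n : Type*} [Fintype m] [Fintype n] [DecidableEq m] [DecidableEq n]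
    (j : m) (i : n) (f : m → ℝ) :
    diagonal f * Matrix.single j i (1:ℝ) = f j • Matrix.single j i (1:ℝ) := by
  ext a b
  rw [Matrix.diagonal_mul]
  by_cases h : a = j <;> simp [Matrix.single, h] <;> aesop

lemma conj_mul_right {k l : ℕ} (U : Matrix (Fin k) (Fin k) ℝ) (V : Matrix (Fin l) (Fin l) ℝ)
    (hU : Uᵀ * U = 1) (E : Matrix (Fin l) (Fin k) ℝ) (D : Matrix (Fin k) (Fin k) ℝ) :
    V * E * Uᵀ * (U * D * Uᵀ) = V * (E * D) * Uᵀ := by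
  simp only [Matrix.mul_assoc]
  rw [← Matrix.mul_assoc Uᵀ U, hU, Matrix.one_mul]

lemma conj_mul_left {k l : ℕ} (U : Matrix (Fin k) (Fin k) ℝ) (V : Matrix (Fin l) (Fin l) ℝ)
    (hV : Vᵀ * V = 1) (E : Matrix (Fin l) (Fin k) ℝ) (D : Matrix (Fin l) (Fin l) ℝ) :
    V * D * Vᵀ * (V * E * Uᵀ) = V * (D * E) * Uᵀ := by
  simp only [Matrix.mul_assoc]
  rw [← Matrix.mul_assoc Vᵀ V, hV, Matrix.one_mul]

/-- Eigenvalues of the composed Sylvester-type operator `X ↦ T⁽ᵏ⁾(T(μ)⁻¹ X)`: given two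
commuting symmetric families, simultaneously diagonalized with eigenvalue vectors `Λ i`
(first block) and `Λ' j` (second block), the spectrum of the composition is exactly
`{(Λ i k₀ - Λ' j k₀) / ⟨Λ i - Λ' j, μ⟩}`. -/
theorem stmt9 (k l d : ℕ)
    (A₁ : Fin d → Matrix (Fin k) (Fin k) ℝ) (A₂ : Fin d → Matrix (Fin l) (Fin l) ℝ)
    (Λ : Fin k → Fin d → ℝ) (Λ' : Fin l → Fin d → ℝ)
    (U : Matrix (Fin k) (Fin k) ℝ) (V : Matrix (Fin l) (Fin l) ℝ)
    (hU : Uᵀ * U = 1) (hV : Vᵀ * V = 1)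
    (hA₁ : ∀ p, A₁ p = U * diagonal (fun i => Λ i p) * Uᵀ)
    (hA₂ : ∀ p, A₂ p = V * diagonal (fun j => Λ' j p) * Vᵀ)
    (μ : Fin d → ℝ) (hsep : ∀ i j, ∑ p, μ p * (Λ i p - Λ' j p) ≠ 0)
    (S : Matrix (Fin l) (Fin k) ℝ →ₗ[ℝ] Matrix (Fin l) (Fin k) ℝ)
    (hS1 : ∀ X, S (X * (∑ p, μ p • A₁ p) - (∑ p, μ p • A₂ p) * X) = X)
    (hS2 : ∀ X, (S X) * (∑ p, μ p • A₁ p) - (∑ p, μ p • A₂ p) * (S X) = X)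
    (k₀ : Fin d)
    (L : Module.End ℝ (Matrix (Fin l) (Fin k) ℝ))
    (hL : ∀ X, L X = (S X) * A₁ k₀ - A₂ k₀ * (S X)) :
    spectrum ℝ L
      = {r | ∃ i j, r = (Λ i k₀ - Λ' j k₀) / ∑ p, μ p * (Λ i p - Λ' j p)} := by
  have hUU : U * Uᵀ = 1 := mul_eq_one_comm.mp hU
  have hVV : V * Vᵀ = 1 := mul_eq_one_comm.mp hV
  -- action of each A₁ p on the eigenvector candidates
  have hXA : ∀ (i : Fin k) (j : Fin l) (p : Fin d),
      (V * Matrix.single j i (1:ℝ) * Uᵀ) * A₁ p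
        = Λ i p • (V * Matrix.single j i (1:ℝ) * Uᵀ) := by
    intro i j p
    rw [hA₁ p, conj_mul_right U V hU, sbm_mul_diag, Matrix.mul_smul, Matrix.smul_mul]
  have hAX : ∀ (i : Fin k) (j : Fin l) (p : Fin d),
      A₂ p * (V * Matrix.single j i (1:ℝ) * Uᵀ)
        = Λ' j p • (V * Matrix.single j i (1:ℝ) * Uᵀ) := by
    intro i j p
    rw [hA₂ p, conj_mul_left U V hV, diag_mul_sbm, Matrix.mul_smul, Matrix.smul_mul]
  -- T(μ) acts diagonally
  have hT : ∀ (i : Fin k) (j : Fin l),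
      (V * Matrix.single j i (1:ℝ) * Uᵀ) * (∑ p, μ p • A₁ p)
        - (∑ p, μ p • A₂ p) * (V * Matrix.single j i (1:ℝ) * Uᵀ)
        = (∑ p, μ p * (Λ i p - Λ' j p)) • (V * Matrix.single j i (1:ℝ) * Uᵀ) := by
    intro i j
    rw [Matrix.mul_sum, Matrix.sum_mul]
    simp only [Matrix.mul_smul, Matrix.smul_mul, hXA, hAX, smul_smul]
    rw [← Finset.sum_sub_distrib]
    simp only [← sub_smul]
    rw [← Finset.sum_smul]
    congr 1
    exact Finset.sum_congr rfl fun p _ => by ring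
  -- S acts diagonally
  have hSX : ∀ (i : Fin k) (j : Fin l),
      S (V * Matrix.single j i (1:ℝ) * Uᵀ)
        = (∑ p, μ p * (Λ i p - Λ' j p))⁻¹ • (V * Matrix.single j i (1:ℝ) * Uᵀ) := by
    intro i j
    have := hS1 ((∑ p, μ p * (Λ i p - Λ' j p))⁻¹ • (V * Matrix.single j i (1:ℝ) * Uᵀ))
    rwa [Matrix.smul_mul, Matrix.mul_smul, ← smul_sub, hT, smul_smul,
      inv_mul_cancel₀ (hsep i j), one_smul] at this
  -- L acts diagonally
  have hLX : ∀ (i : Fin k) (j : Fin l),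
      L (V * Matrix.single j i (1:ℝ) * Uᵀ)
        = ((Λ i k₀ - Λ' j k₀) / ∑ p, μ p * (Λ i p - Λ' j p))
            • (V * Matrix.single j i (1:ℝ) * Uᵀ) := by
    intro i j
    rw [hL, hSX, Matrix.smul_mul, Matrix.mul_smul, ← smul_sub, hXA, hAX,
      ← sub_smul, smul_smul, div_eq_inv_mul]
  -- the basis of eigenvectors
  let f : Matrix (Fin l) (Fin k) ℝ ≃ₗ[ℝ] Matrix (Fin l) (Fin k) ℝ :=
    { toFun := fun M => V * M * Uᵀ
      invFun := fun M => Vᵀ * M * U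
      map_add' := by intro a b; rw [Matrix.mul_add, Matrix.add_mul]
      map_smul' := by intro r a; rw [Matrix.mul_smul, Matrix.smul_mul, RingHom.id_apply]
      left_inv := by
        intro M
        simp only [Matrix.mul_assoc]
        rw [hU, Matrix.mul_one, ← Matrix.mul_assoc Vᵀ V M, hV, Matrix.one_mul]
      right_inv := by
        intro M
        simp only [Matrix.mul_assoc]
        rw [hUU, Matrix.mul_one, ← Matrix.mul_assoc V Vᵀ M, hVV, Matrix.one_mul] }
  let b : Module.Basis (Fin l × Fin k) ℝ (Matrix (Fin l) (Fin k) ℝ) :=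
    (Matrix.stdBasis ℝ (Fin l) (Fin k)).map f
  have hb : ∀ q : Fin l × Fin k, b q = V * Matrix.single q.1 q.2 (1:ℝ) * Uᵀ := by
    intro q
    show f ((Matrix.stdBasis ℝ (Fin l) (Fin k)) q) = _
    rw [show q = (q.1, q.2) from rfl, Matrix.stdBasis_eq_single]
    rfl
  set r0 : Fin l × Fin k → ℝ :=
    fun q => (Λ q.2 k₀ - Λ' q.1 k₀) / ∑ p, μ p * (Λ q.2 p - Λ' q.1 p) with hr0
  have hLb : ∀ q, L (b q) = r0 q • b q := by
    intro q; rw [hb, hLX]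
  ext r
  simp only [Set.mem_setOf_eq]
  constructor
  · intro hr
    have hev : L.HasEigenvalue r := Module.End.hasEigenvalue_iff_mem_spectrum.mpr hr
    obtain ⟨v, hv⟩ := hev.exists_hasEigenvector
    have hvrepr : v = ∑ q, b.repr v q • b q := (b.sum_repr v).symm
    have hLv : L v = r • v := hv.apply_eq_smul
    have key : ∑ q, (b.repr v q * r0 q - r * b.repr v q) • b q = 0 := by
      have h1 : L v = ∑ q, (b.repr v q * r0 q) • b q := by
        conv_lhs => rw [hvrepr]
        rw [map_sum]
        refine Finset.sum_congr rfl fun q _ => ?_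
        rw [_root_.map_smul, hLb, smul_smul]
      have h2 : r • v = ∑ q, (r * b.repr v q) • b q := by
        conv_lhs => rw [hvrepr]
        rw [Finset.smul_sum]
        refine Finset.sum_congr rfl fun q _ => ?_
        rw [smul_smul]
      simp only [sub_smul, Finset.sum_sub_distrib, ← h1, ← h2, hLv, sub_self]
    have hzero := Fintype.linearIndependent_iff.mp b.linearIndependent _ key
    obtain ⟨q, hq⟩ : ∃ q, b.repr v q ≠ 0 := by
      by_contra h
      push_neg at h
      exact hv.2 (by rw [hvrepr]; simp [h])
    have h3 : b.repr v q * (r0 q - r) = 0 := by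
      have := hzero q
      have hc : b.repr v q * r = r * b.repr v q := mul_comm _ _
      rw [mul_sub]
      linarith
    rcases mul_eq_zero.mp h3 with h | h
    · exact absurd h hq
    · exact ⟨q.2, q.1, (sub_eq_zero.mp h).symm⟩
  · rintro ⟨i, j, rfl⟩
    apply Module.End.hasEigenvalue_iff_mem_spectrum.mp
    exact Module.End.hasEigenvalue_of_hasEigenvector
      ⟨Module.End.mem_eigenspace_iff.mpr (hLb (j, i)), b.ne_zero (j, i)⟩
end

section
/- Let x be a unit vector in ℝ^n, A a real symmetric n×n matrix, and Q an orthogonal matrix whose i-th column is x. Then the Euclidean norm of the i-th column of offdiag(Q^T A Q) equals ‖(A − (x^T A x) I) x‖₂. -/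
open Matrix

/-- If the `i`-th column of the orthogonal matrix `Q` is the unit vector `x`, then the
Euclidean norm of the `i`-th column of `offdiag(Qᵀ A Q)` equals the residual norm
`‖(A - (xᵀ A x) I) x‖₂`. -/
theorem stmt18 (n : ℕ) (x : Fin n → ℝ) (hx : ∑ j, x j ^ 2 = 1)
    (A : Matrix (Fin n) (Fin n) ℝ) (hA : A.IsSymm)
    (Q : Matrix (Fin n) (Fin n) ℝ) (hQ : Qᵀ * Q = 1) (i : Fin n)
    (hQi : (fun j => Q j i) = x) :
    Real.sqrt (∑ j, (if j = i then 0 else (Qᵀ * A * Q) j i) ^ 2)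
      = Real.sqrt (∑ j, ((A *ᵥ x) j - (x ⬝ᵥ (A *ᵥ x)) * x j) ^ 2) := by
  have hQQ : Q * Qᵀ = 1 := by rwa [mul_eq_one_comm] at hQ
  set y := A *ᵥ x with hy
  set lam := x ⬝ᵥ y with hlam
  have hxk : ∀ k, Q k i = x k := fun k => congrFun hQi k
  have hv : ∀ j, (Qᵀ * A * Q) j i = (Qᵀ *ᵥ y) j := by
    intro j
    have : (Qᵀ * A * Q) j i = ((Qᵀ * A) *ᵥ x) j := by
      simp [Matrix.mul_apply, Matrix.mulVec, dotProduct, hxk]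
    rw [this, hy, ← Matrix.mulVec_mulVec]
  have hvi : (Qᵀ *ᵥ y) i = lam := by
    simp [Matrix.mulVec, dotProduct, Matrix.transpose_apply, hxk, hlam]
  have hnorm : ∑ j, ((Qᵀ *ᵥ y) j) ^ 2 = ∑ j, (y j) ^ 2 := by
    have h1 : ∑ j, ((Qᵀ *ᵥ y) j) ^ 2 = (Qᵀ *ᵥ y) ⬝ᵥ (Qᵀ *ᵥ y) := by
      simp [dotProduct, sq]
    have h2 : (Qᵀ *ᵥ y) ⬝ᵥ (Qᵀ *ᵥ y) = y ⬝ᵥ y := by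
      rw [Matrix.dotProduct_mulVec, Matrix.vecMul_transpose, Matrix.mulVec_mulVec, hQQ,
        Matrix.one_mulVec]
    rw [h1, h2]
    simp [dotProduct, sq]
  have hsum : ∑ j, (if j = i then 0 else (Qᵀ * A * Q) j i) ^ 2
      = ∑ j, (y j - lam * x j) ^ 2 := by
    have lhs : ∑ j, (if j = i then 0 else (Qᵀ * A * Q) j i) ^ 2
        = (∑ j, ((Qᵀ *ᵥ y) j) ^ 2) - lam ^ 2 := by
      have : ∀ j, (if j = i then 0 else (Qᵀ * A * Q) j i) ^ 2
          = ((Qᵀ *ᵥ y) j) ^ 2 - (if j = i then lam ^ 2 else 0) := by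
        intro j
        by_cases h : j = i
        · subst h; simp [hvi]
        · simp [h, hv]
      simp [this, Finset.sum_sub_distrib]
    have rhs : ∑ j, (y j - lam * x j) ^ 2 = (∑ j, (y j) ^ 2) - lam ^ 2 := by
      have hxy : ∑ j, x j * y j = lam := by simp [hlam, dotProduct]
      have expand : ∀ j, (y j - lam * x j) ^ 2
          = (y j) ^ 2 - 2 * lam * (x j * y j) + lam ^ 2 * (x j) ^ 2 := by
        intro j; ring
      rw [Finset.sum_congr rfl fun j _ => expand j]
      rw [Finset.sum_add_distrib, Finset.sum_sub_distrib, ← Finset.mul_sum, hxy,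
        ← Finset.mul_sum, hx]
      ring
    rw [lhs, rhs, hnorm]
  rw [hsum]
end
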